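/- arXiv:2011.01343 — 3 statements merged into one kernel-verified Lean document; each statement's English description precedes it below -/
import Mathlib

section
/- For every t ∈ ℕ, Z_t ≤ M_t / S_t almost surely. -/
open MeasureTheory Filter Set

/-- The running maximum `S t = max_{s ≤ t} M s`. -/
noncomputable def runMax {Ω : Type*} (M : ℕ → Ω → ℝ) (t : ℕ) (ω : Ω) : ℝ :=
  (Finset.range (t + 1)).sup' (Finset.nonempty_range_iff.mpr (Nat.succ_ne_zero t))
    (fun s => M s ω)

/-- The (ℕ ∪ {∞})-valued time of the final attained maximum of `M`. -/
noncomputable def tauF {Ω : Type*} (M : ℕ → Ω → ℝ) (ω : Ω) : ℕ∞ :=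
  ⨆ s ∈ {s : ℕ | M s ω = runMax M s ω}, (s : ℕ∞)

section Aux

variable {Ω : Type*} {M : ℕ → Ω → ℝ}

lemma runMax_zero (M : ℕ → Ω → ℝ) (ω : Ω) : runMax M 0 ω = M 0 ω := by
  simp [runMax]

lemma le_runMax {s t : ℕ} (h : s ≤ t) (ω : Ω) : M s ω ≤ runMax M t ω :=
  Finset.le_sup' (fun u => M u ω) (Finset.mem_range.mpr (Nat.lt_succ_of_le h))

lemma runMax_mono {t u : ℕ} (h : t ≤ u) (ω : Ω) : runMax M t ω ≤ runMax M u ω :=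
  Finset.sup'_le _ _ fun s hs => le_runMax (by
    have := Finset.mem_range.mp hs; omega) ω

lemma runMax_succ (M : ℕ → Ω → ℝ) (t : ℕ) (ω : Ω) :
    runMax M (t + 1) ω = max (runMax M t ω) (M (t + 1) ω) := by
  refine le_antisymm (Finset.sup'_le _ _ fun s hs => ?_)
    (max_le (runMax_mono (Nat.le_succ t) ω) (le_runMax le_rfl ω))
  have hs' := Finset.mem_range.mp hs
  rcases Nat.lt_or_ge s (t + 1) with h | h
  · exact le_max_of_le_left (le_runMax (by omega) ω)
  · have hst : s = t + 1 := by omega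
    subst hst
    exact le_max_right _ _

lemma measurable_runMax {m0 : MeasurableSpace Ω} (ℱ : Filtration ℕ m0)
    (hM : ∀ s, Measurable[ℱ s] (M s)) (t : ℕ) :
    Measurable[ℱ t] (runMax M t) := by
  induction t with
  | zero =>
    have h : runMax M 0 = M 0 := funext fun ω => runMax_zero M ω
    rw [h]; exact hM 0
  | succ n ih =>
    have h : runMax M (n + 1) = fun ω => max (runMax M n ω) (M (n + 1) ω) :=
      funext fun ω => runMax_succ M n ω
    rw [h]
    exact Measurable.max (ih.mono (ℱ.mono (Nat.le_succ n)) le_rfl) (hM (n + 1))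

/-- The event `{τ_F ≥ t}` is the event that the running maximum is attained
at some time `≥ t`. -/
lemma tauF_set_eq (M : ℕ → Ω → ℝ) (t : ℕ) :
    {ω : Ω | (t : ℕ∞) ≤ tauF M ω}
      = {ω : Ω | ∃ s, t ≤ s ∧ M s ω = runMax M s ω} := by
  ext ω
  simp only [Set.mem_setOf_eq]
  constructor
  · intro h
    by_contra hc
    push_neg at hc
    rcases Nat.eq_zero_or_pos t with ht | ht
    · exact absurd (runMax_zero M ω).symm (by simpa [ht] using hc 0 (by omega))
    · have hle : tauF M ω ≤ ((t - 1 : ℕ) : ℕ∞) := by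
        refine iSup₂_le fun s hs => ?_
        have hst : ¬ t ≤ s := fun hts => hc s hts hs
        have hle' : s ≤ t - 1 := by omega
        exact_mod_cast hle'
      have h2 := le_trans h hle
      have h3 := Nat.cast_le.mp h2
      omega
  · rintro ⟨s, hts, hs⟩
    calc (t : ℕ∞) ≤ (s : ℕ∞) := by exact_mod_cast hts
    _ ≤ tauF M ω := le_iSup₂ (f := fun (s : ℕ) (_ : s ∈ _) => (s : ℕ∞)) s hs

end Aux

/-- The Azéma supermartingale `Z t = P(τ_F ≥ t | ℱ t)` is bounded by `M t / S t` a.s. -/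
theorem stmt2 {Ω : Type*} {m0 : MeasurableSpace Ω} {P : Measure Ω} [IsProbabilityMeasure P]
    (ℱ : Filtration ℕ m0) (M : ℕ → Ω → ℝ)
    (hsuper : Supermartingale M ℱ P) (hnonneg : ∀ t ω, 0 ≤ M t ω)
    (hone : ∀ ω, M 0 ω = 1) (t : ℕ) :
    ∀ᵐ ω ∂P,
      (P[Set.indicator {ω' | (t : ℕ∞) ≤ tauF M ω'} (fun _ => (1 : ℝ)) | ℱ t]) ω
        ≤ M t ω / runMax M t ω := by
  classical
  rw [tauF_set_eq M t]
  -- Notation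
  set S : Ω → ℝ := runMax M t with hS_def
  have hMmeas : ∀ s, Measurable[ℱ s] (M s) := fun s => (hsuper.stronglyAdapted s).measurable
  have hMmeas0 : ∀ s, Measurable (M s) := fun s => (hMmeas s).mono (ℱ.le s) le_rfl
  have hS_meas : Measurable[ℱ t] S := measurable_runMax ℱ hMmeas t
  have hS_meas0 : Measurable S := hS_meas.mono (ℱ.le t) le_rfl
  have hS_one : ∀ ω, (1 : ℝ) ≤ S ω := fun ω => (hone ω) ▸ le_runMax (Nat.zero_le t) ω
  have hS_pos : ∀ ω, (0 : ℝ) < S ω := fun ω => lt_of_lt_of_le zero_lt_one (hS_one ω)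
  -- integrability of S
  have hS_int : Integrable S P := by
    refine Integrable.mono' (g := fun ω => ∑ s ∈ Finset.range (t + 1), M s ω)
      (integrable_finset_sum _ fun s _ => hsuper.integrable s)
      hS_meas0.stronglyMeasurable.aestronglyMeasurable (ae_of_all _ fun ω => ?_)
    rw [Real.norm_eq_abs, abs_of_pos (hS_pos ω)]
    exact Finset.sup'_le _ _ fun s hs =>
      Finset.single_le_sum (fun u _ => hnonneg u ω) hs
  -- the event A
  set A : Set Ω := {ω : Ω | ∃ s, t ≤ s ∧ M s ω = runMax M s ω} with hA_def
  have hA_meas : MeasurableSet A := by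
    have h : A = ⋃ s, ⋃ (_ : t ≤ s), {ω | M s ω = runMax M s ω} := by
      ext ω; simp [hA_def]
    rw [h]
    exact MeasurableSet.iUnion fun s => MeasurableSet.iUnion fun _ =>
      measurableSet_eq_fun (hMmeas0 s) ((measurable_runMax ℱ hMmeas s).mono (ℱ.le s) le_rfl)
  set g : Ω → ℝ := A.indicator (fun _ => (1 : ℝ)) with hg_def
  have hg_int : Integrable g P := (integrable_const (1 : ℝ)).indicator hA_meas
  have hg_meas0 : Measurable g := measurable_const.indicator hA_meas
  have hSg_eq : ∀ ω, S ω * g ω = A.indicator S ω := by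
    intro ω
    by_cases h : ω ∈ A <;>
      simp [hg_def, Set.indicator_of_mem, Set.indicator_of_notMem, h]
  have hSg_int : Integrable (S * g) P := by
    refine Integrable.mono' hS_int
      ((hS_meas0.mul hg_meas0).stronglyMeasurable.aestronglyMeasurable)
      (ae_of_all _ fun ω => ?_)
    rw [Pi.mul_apply, hSg_eq ω, Real.norm_eq_abs]
    by_cases h : ω ∈ A
    · rw [Set.indicator_of_mem h, abs_of_pos (hS_pos ω)]
    · rw [Set.indicator_of_notMem h, abs_zero]; exact le_of_lt (hS_pos ω)
  -- the key set-integral inequality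
  have key : ∀ B : Set Ω, MeasurableSet[ℱ t] B →
      ∫ ω in B, (S * g) ω ∂P ≤ ∫ ω in B, M t ω ∂P := by
    intro B hB
    have hB0 : MeasurableSet B := ℱ.le t _ hB
    -- rewrite LHS as integral over B ∩ A
    have hL : ∫ ω in B, (S * g) ω ∂P = ∫ ω in B ∩ A, S ω ∂P := by
      calc ∫ ω in B, (S * g) ω ∂P = ∫ ω in B, A.indicator S ω ∂P :=
            integral_congr_ae (ae_of_all _ fun ω => hSg_eq ω)
        _ = ∫ ω in B ∩ A, S ω ∂P := setIntegral_indicator hA_meas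
    rw [hL]
    -- approximate A from inside
    set An : ℕ → Set Ω :=
      fun n => {ω : Ω | ∃ s, t ≤ s ∧ s ≤ t + n ∧ M s ω = runMax M s ω} with hAn_def
    have hAn_meas : ∀ n, MeasurableSet (An n) := by
      intro n
      have h : An n = ⋃ s, ⋃ (_ : t ≤ s ∧ s ≤ t + n), {ω | M s ω = runMax M s ω} := by
        ext ω; simp [hAn_def, and_assoc]
      rw [h]
      exact MeasurableSet.iUnion fun s => MeasurableSet.iUnion fun _ =>
        measurableSet_eq_fun (hMmeas0 s)
          ((measurable_runMax ℱ hMmeas s).mono (ℱ.le s) le_rfl)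
    have hAn_mono : Monotone fun n => B ∩ An n := by
      intro m n hmn ω hω
      obtain ⟨hωB, s, h1, h2, h3⟩ := hω
      exact ⟨hωB, s, h1, by omega, h3⟩
    have hAn_union : ⋃ n, (B ∩ An n) = B ∩ A := by
      ext ω
      simp only [Set.mem_iUnion, Set.mem_inter_iff, hAn_def, hA_def, Set.mem_setOf_eq]
      constructor
      · rintro ⟨n, hωB, s, h1, _, h3⟩; exact ⟨hωB, s, h1, h3⟩
      · rintro ⟨hωB, s, h1, h3⟩; exact ⟨s - t, hωB, s, h1, by omega, h3⟩
    -- the stopping decomposition for a fixed horizon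
    set E : ℕ → Set Ω := fun k => B ∩ ⋂ u ∈ Finset.Ico t k, {ω | M u ω < S ω} with hE_def
    set D : ℕ → Set Ω := fun k => E k ∩ {ω | S ω ≤ M k ω} with hD_def
    have hE_meas : ∀ k j, t ≤ j → k ≤ j + 1 → MeasurableSet[ℱ j] (E k) := by
      intro k j htj hkj
      refine (ℱ.mono htj _ hB).inter ?_
      refine Finset.measurableSet_biInter _ fun u hu => ?_
      have hu' : t ≤ u ∧ u < k := Finset.mem_Ico.mp hu
      exact measurableSet_lt ((hMmeas u).mono (ℱ.mono (by omega)) le_rfl)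
        (hS_meas.mono (ℱ.mono htj) le_rfl)
    have hD_meas : ∀ k, t ≤ k → MeasurableSet[ℱ k] (D k) := by
      intro k htk
      exact (hE_meas k k htk (by omega)).inter
        (measurableSet_le (hS_meas.mono (ℱ.mono htk) le_rfl) (hMmeas k))
    have hE_meas0 : ∀ k, t ≤ k → MeasurableSet (E k) :=
      fun k htk => ℱ.le _ _ (hE_meas k k htk (by omega))
    have hD_meas0 : ∀ k, t ≤ k → MeasurableSet (D k) :=
      fun k htk => ℱ.le _ _ (hD_meas k htk)
    have hE_t : E t = B := by
      simp [hE_def]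
    have hE_split : ∀ n, t ≤ n → E n = D n ∪ E (n + 1) := by
      intro n htn
      ext ω
      constructor
      · rintro ⟨hωB, hI⟩
        rcases le_or_gt (S ω) (M n ω) with h | h
        · exact Or.inl ⟨⟨hωB, hI⟩, h⟩
        · refine Or.inr ⟨hωB, Set.mem_iInter₂.mpr fun u hu => ?_⟩
          have hu' : t ≤ u ∧ u < n + 1 := Finset.mem_Ico.mp hu
          rcases Nat.lt_or_ge u n with hun | hun
          · exact Set.mem_iInter₂.mp hI u (Finset.mem_Ico.mpr ⟨hu'.1, hun⟩)
          · have : u = n := by omega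
            subst this; exact h
      · rintro (⟨hωE, _⟩ | ⟨hωB, hI⟩)
        · exact hωE
        · refine ⟨hωB, Set.mem_iInter₂.mpr fun u hu => ?_⟩
          have hu' : t ≤ u ∧ u < n := Finset.mem_Ico.mp hu
          exact Set.mem_iInter₂.mp hI u (Finset.mem_Ico.mpr ⟨hu'.1, by omega⟩)
    -- backward-in-time induction bound
    have key2 : ∀ n, t ≤ n →
        (∑ s ∈ Finset.Ico t n, ∫ ω in D s, M s ω ∂P) + ∫ ω in E n, M n ω ∂P
          ≤ ∫ ω in B, M t ω ∂P := by
      intro n htn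
      induction n, htn using Nat.le_induction with
      | base => simp [hE_t]
      | succ n htn ih =>
        have hdisj : Disjoint (D n) (E (n + 1)) := by
          rw [Set.disjoint_left]
          rintro ω ⟨_, h1⟩ ⟨_, h2⟩
          have hlt : M n ω < S ω :=
            Set.mem_iInter₂.mp h2 n (Finset.mem_Ico.mpr ⟨htn, by omega⟩)
          exact absurd h1 (not_le.mpr hlt)
        have hEn : ∫ ω in E n, M n ω ∂P
            = (∫ ω in D n, M n ω ∂P) + ∫ ω in E (n + 1), M n ω ∂P := by
          rw [hE_split n htn]
          exact setIntegral_union hdisj (hE_meas0 (n + 1) (by omega))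
            ((hsuper.integrable n).integrableOn) ((hsuper.integrable n).integrableOn)
        have hstep : ∫ ω in E (n + 1), M (n + 1) ω ∂P ≤ ∫ ω in E (n + 1), M n ω ∂P :=
          hsuper.setIntegral_le (Nat.le_succ n) (hE_meas (n + 1) n htn le_rfl)
        rw [Finset.sum_Ico_succ_top htn]
        linarith
    -- covering: B ∩ An n is contained in the disjoint union of the D s
    have hcover : ∀ n, B ∩ An n ⊆ ⋃ s ∈ Finset.Ico t (t + n + 1), D s := by
      intro n ω hω
      obtain ⟨hωB, s, h1, h2, h3⟩ := hω
      have hp : ∃ u, t ≤ u ∧ u ≤ t + n ∧ S ω ≤ M u ω := by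
        refine ⟨s, h1, h2, ?_⟩
        rw [h3]
        exact runMax_mono h1 ω
      obtain ⟨hs1, hs2, hs3⟩ := Nat.find_spec hp
      have hmem : ω ∈ D (Nat.find hp) := by
        refine ⟨⟨hωB, Set.mem_iInter₂.mpr fun u hu => ?_⟩, hs3⟩
        have hu' : t ≤ u ∧ u < Nat.find hp := Finset.mem_Ico.mp hu
        simp only [Set.mem_setOf_eq]
        by_contra hcon
        push_neg at hcon
        exact Nat.find_min hp hu'.2 ⟨hu'.1, by omega, hcon⟩
      exact Set.mem_biUnion (Finset.mem_Ico.mpr ⟨hs1, by omega⟩) hmem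
    have hdisjD : ∀ n, Set.Pairwise (↑(Finset.Ico t (t + n + 1)) : Set ℕ)
        (Function.onFun Disjoint D) := by
      have hd : ∀ i j, t ≤ i → i < j → Disjoint (D i) (D j) := by
        intro i j hti hlt
        rw [Set.disjoint_left]
        rintro ω ⟨_, h1⟩ ⟨⟨_, h2⟩, _⟩
        have hlt2 : M i ω < S ω :=
          Set.mem_iInter₂.mp h2 i (Finset.mem_Ico.mpr ⟨hti, hlt⟩)
        exact absurd h1 (not_le.mpr hlt2)
      intro n i hi j hj hij
      simp only [Finset.coe_Ico, Set.mem_Ico] at hi hj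
      rcases lt_or_gt_of_ne hij with h | h
      · exact hd i j hi.1 h
      · exact (hd j i hj.1 h).symm
    -- per-horizon bound
    have hhoriz : ∀ n, ∫ ω in B ∩ An n, S ω ∂P ≤ ∫ ω in B, M t ω ∂P := by
      intro n
      have h1 : ∫ ω in B ∩ An n, S ω ∂P
          ≤ ∫ ω in ⋃ s ∈ Finset.Ico t (t + n + 1), D s, S ω ∂P :=
        setIntegral_mono_set hS_int.integrableOn
          (ae_of_all _ fun ω => le_of_lt (hS_pos ω))
          ((hcover n).eventuallyLE)
      have h2 : ∫ ω in ⋃ s ∈ Finset.Ico t (t + n + 1), D s, S ω ∂P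
          = ∑ s ∈ Finset.Ico t (t + n + 1), ∫ ω in D s, S ω ∂P :=
        integral_biUnion_finset _ (fun s hs => hD_meas0 s (Finset.mem_Ico.mp hs).1)
          (hdisjD n) (fun s _ => hS_int.integrableOn)
      have h3 : ∑ s ∈ Finset.Ico t (t + n + 1), ∫ ω in D s, S ω ∂P
          ≤ ∑ s ∈ Finset.Ico t (t + n + 1), ∫ ω in D s, M s ω ∂P := by
        refine Finset.sum_le_sum fun s hs => ?_
        refine setIntegral_mono_on hS_int.integrableOn
          (hsuper.integrable s).integrableOn
          (hD_meas0 s (Finset.mem_Ico.mp hs).1) fun ω hω => hω.2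
      have h4 : (0 : ℝ) ≤ ∫ ω in E (t + n + 1), M (t + n + 1) ω ∂P :=
        setIntegral_nonneg (hE_meas0 _ (by omega)) fun ω _ => hnonneg _ ω
      have h5 := key2 (t + n + 1) (by omega)
      linarith
    -- pass to the limit
    have hlim := tendsto_setIntegral_of_monotone
      (fun n => hB0.inter (hAn_meas n)) hAn_mono
      (by rw [hAn_union]; exact hS_int.integrableOn)
    rw [hAn_union] at hlim
    exact le_of_tendsto hlim (Eventually.of_forall hhoriz)
  -- pull-out property
  have hpull : P[S * g | ℱ t] =ᵐ[P] S * P[g | ℱ t] :=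
    condExp_mul_of_stronglyMeasurable_left hS_meas.stronglyMeasurable hSg_int hg_int
  -- condexp of S*g is a.e. below M t
  have hF_le : P[S * g | ℱ t] ≤ᵐ[P] M t := by
    have hmle := ℱ.le t
    refine ae_of_ae_trim hmle (ae_le_of_forall_setIntegral_le
      (integrable_condExp.trim hmle stronglyMeasurable_condExp)
      ((hsuper.integrable t).trim hmle (hsuper.stronglyAdapted t)) fun s hs _ => ?_)
    rw [← setIntegral_trim hmle stronglyMeasurable_condExp hs,
      ← setIntegral_trim hmle (hsuper.stronglyAdapted t) hs,
      setIntegral_condExp hmle hSg_int hs]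
    exact key s hs
  -- conclude
  filter_upwards [hpull, hF_le] with ω h1 h2
  rw [le_div_iff₀ (hS_pos ω)]
  have h3 : S ω * (P[g | ℱ t]) ω ≤ M t ω := by
    rw [← Pi.mul_apply S (P[g | ℱ t]), ← h1]
    exact h2
  linarith [h3]
end

section
/- Define R_t := min_{s ≤ t} M_s / S_s. For every stopping time τ that is almost surely finite and satisfies τ ≤ τ_F almost surely, and for every u ∈ (0,1): P( R_τ ≤ u ) ≤ u; that is, R_τ stochastically dominates a uniform (0,1) random variable. -/
open MeasureTheory Filter Set

/-- `R t = min_{s ≤ t} M s / S s`. -/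
noncomputable def Rproc {Ω : Type*} (M : ℕ → Ω → ℝ) (t : ℕ) (ω : Ω) : ℝ :=
  (Finset.range (t + 1)).inf' (Finset.nonempty_range_iff.mpr (Nat.succ_ne_zero t))
    (fun s => M s ω / runMax M s ω)

namespace Stmt5Aux

open scoped Classical

variable {Ω : Type*}

lemma le_runMax (M : ℕ → Ω → ℝ) {s t : ℕ} (h : s ≤ t) (ω : Ω) : M s ω ≤ runMax M t ω :=
  Finset.le_sup' (f := fun s => M s ω) (Finset.mem_range.mpr (Nat.lt_succ_of_le h))

lemma runMax_mono (M : ℕ → Ω → ℝ) {s t : ℕ} (h : s ≤ t) (ω : Ω) :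
    runMax M s ω ≤ runMax M t ω :=
  Finset.sup'_le _ _ fun b hb =>
    le_runMax M (le_trans (Nat.lt_succ_iff.mp (Finset.mem_range.mp hb)) h) ω

lemma runMax_zero (M : ℕ → Ω → ℝ) (ω : Ω) : runMax M 0 ω = M 0 ω := by
  simp [runMax]

lemma runMax_succ (M : ℕ → Ω → ℝ) (t : ℕ) (ω : Ω) :
    runMax M (t + 1) ω = max (M (t + 1) ω) (runMax M t ω) := by
  refine le_antisymm (Finset.sup'_le _ _ fun s hs => ?_)
    (max_le (le_runMax M le_rfl ω) (runMax_mono M (Nat.le_succ t) ω))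
  have hs' : s ≤ t + 1 := Nat.lt_succ_iff.mp (Finset.mem_range.mp hs)
  rcases Nat.lt_succ_iff_lt_or_eq.mp (Nat.lt_succ_of_le hs') with h | h
  · exact le_max_of_le_right (le_runMax M (Nat.lt_succ_iff.mp h) ω)
  · subst h; exact le_max_left _ _

lemma one_le_runMax (M : ℕ → Ω → ℝ) (hone : ∀ ω, M 0 ω = 1) (t : ℕ) (ω : Ω) :
    (1 : ℝ) ≤ runMax M t ω := by
  have := le_runMax M (Nat.zero_le t) ω
  rw [hone] at this; exact this

lemma runMax_pos (M : ℕ → Ω → ℝ) (hone : ∀ ω, M 0 ω = 1) (t : ℕ) (ω : Ω) :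
    (0 : ℝ) < runMax M t ω :=
  lt_of_lt_of_le one_pos (one_le_runMax M hone t ω)

/-! ### The stopping machinery -/

/-- `hitA u t ω` : the ratio drops below `u` at time `t`. -/
def hitA (M : ℕ → Ω → ℝ) (u : ℝ) (t : ℕ) (ω : Ω) : Prop := M t ω ≤ u * runMax M t ω

/-- first time the ratio drops below `u` (junk value `0` if never). -/
noncomputable def sig (M : ℕ → Ω → ℝ) (u : ℝ) (ω : Ω) : ℕ := sInf {t | hitA M u t ω}

/-- the level `S_σ`. -/
noncomputable def cS (M : ℕ → Ω → ℝ) (u : ℝ) (ω : Ω) : ℝ := runMax M (sig M u ω) ω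

/-- `hitB u t ω` : σ is a genuine hitting time, `σ ≤ t`, and `M` re-attains level `S_σ`. -/
def hitB (M : ℕ → Ω → ℝ) (u : ℝ) (t : ℕ) (ω : Ω) : Prop :=
  hitA M u (sig M u ω) ω ∧ sig M u ω ≤ t ∧ cS M u ω ≤ M t ω

noncomputable def rho (M : ℕ → Ω → ℝ) (u : ℝ) (ω : Ω) : ℕ := sInf {t | hitB M u t ω}

noncomputable def rhoN (M : ℕ → Ω → ℝ) (u : ℝ) (n : ℕ) (ω : Ω) : ℕ :=
  if ∃ t, t ≤ n ∧ hitB M u t ω then rho M u ω else n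

/-- The auxiliary supermartingale: `u` before `σ`, then `M_{ρ ∧ t}/S_σ`. -/
noncomputable def Z (M : ℕ → Ω → ℝ) (u : ℝ) (n : ℕ) (ω : Ω) : ℝ :=
  if ∃ s, s ≤ n ∧ hitA M u s ω then M (rhoN M u n ω) ω / cS M u ω else u

variable {M : ℕ → Ω → ℝ} {u : ℝ}

lemma sig_mem {ω : Ω} (h : ∃ t, hitA M u t ω) : hitA M u (sig M u ω) ω := Nat.sInf_mem h

lemma sig_le {t : ℕ} {ω : Ω} (h : hitA M u t ω) : sig M u ω ≤ t := Nat.sInf_le h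

lemma rho_mem {ω : Ω} (h : ∃ t, hitB M u t ω) : hitB M u (rho M u ω) ω := Nat.sInf_mem h

lemma rho_le {t : ℕ} {ω : Ω} (h : hitB M u t ω) : rho M u ω ≤ t := Nat.sInf_le h

lemma not_hitA_zero (hone : ∀ ω, M 0 ω = 1) (hu1 : u < 1) (ω : Ω) : ¬ hitA M u 0 ω := by
  intro h
  rw [hitA, runMax_zero, hone] at h
  nlinarith

lemma one_le_cS (hone : ∀ ω, M 0 ω = 1) (ω : Ω) : (1 : ℝ) ≤ cS M u ω :=
  one_le_runMax M hone _ ω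

lemma cS_pos (hone : ∀ ω, M 0 ω = 1) (ω : Ω) : (0 : ℝ) < cS M u ω :=
  lt_of_lt_of_le one_pos (one_le_cS hone ω)

lemma rhoN_le (n : ℕ) (ω : Ω) : rhoN M u n ω ≤ n := by
  rw [rhoN]
  split
  · rename_i h
    obtain ⟨t, ht, hB⟩ := h
    exact le_trans (rho_le hB) ht
  · exact le_rfl

lemma Z_zero (hone : ∀ ω, M 0 ω = 1) (hu1 : u < 1) (ω : Ω) : Z M u 0 ω = u := by
  rw [Z, if_neg]
  rintro ⟨s, hs, h⟩
  interval_cases s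
  exact not_hitA_zero hone hu1 ω h

lemma Z_nonneg (hone : ∀ ω, M 0 ω = 1) (hnonneg : ∀ t ω, 0 ≤ M t ω) (hu : 0 ≤ u)
    (n : ℕ) (ω : Ω) : 0 ≤ Z M u n ω := by
  rw [Z]
  split
  · exact div_nonneg (hnonneg _ _) (cS_pos hone ω).le
  · exact hu

lemma Z_le_bound (hone : ∀ ω, M 0 ω = 1) (hnonneg : ∀ t ω, 0 ≤ M t ω) (hu : 0 ≤ u)
    (n : ℕ) (ω : Ω) : Z M u n ω ≤ u + ∑ s ∈ Finset.range (n + 1), M s ω := by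
  have hsum : ∀ r, r ≤ n → M r ω ≤ ∑ s ∈ Finset.range (n + 1), M s ω := fun r hr =>
    Finset.single_le_sum (f := fun s => M s ω) (fun i _ => hnonneg i ω)
      (Finset.mem_range.mpr (Nat.lt_succ_of_le hr))
  rw [Z]
  split
  · calc M (rhoN M u n ω) ω / cS M u ω ≤ M (rhoN M u n ω) ω :=
          div_le_self (hnonneg _ _) (one_le_cS hone ω)
      _ ≤ ∑ s ∈ Finset.range (n + 1), M s ω := hsum _ (rhoN_le n ω)
      _ ≤ u + ∑ s ∈ Finset.range (n + 1), M s ω := by linarith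
  · have : 0 ≤ ∑ s ∈ Finset.range (n + 1), M s ω :=
      Finset.sum_nonneg fun i _ => hnonneg i ω
    linarith

lemma Z_ge_one (hone : ∀ ω, M 0 ω = 1) {n : ℕ} {ω : Ω}
    (h : ∃ t, t ≤ n ∧ hitB M u t ω) : (1 : ℝ) ≤ Z M u n ω := by
  obtain ⟨t, htn, hB⟩ := h
  have hA : ∃ s, s ≤ n ∧ hitA M u s ω := ⟨sig M u ω, le_trans hB.2.1 htn, hB.1⟩
  have hrho : hitB M u (rho M u ω) ω := rho_mem ⟨t, hB⟩
  rw [Z, if_pos hA, rhoN, if_pos ⟨t, htn, hB⟩]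
  rw [le_div_iff₀ (cS_pos hone ω), one_mul]
  exact hrho.2.2

/-- The set where the supermartingale increment actually matters. -/
def G4 (M : ℕ → Ω → ℝ) (u : ℝ) (t : ℕ) : Set Ω :=
  {ω | (∃ s, s ≤ t ∧ hitA M u s ω) ∧ ¬ ∃ s, s ≤ t ∧ hitB M u s ω}

lemma step_pointwise (hone : ∀ ω, M 0 ω = 1) (hu1 : u < 1) (t : ℕ) (ω : Ω) :
    Z M u (t + 1) ω - Z M u t ω ≤
      Set.indicator (G4 M u t) (fun ω => (M (t + 1) ω - M t ω) / cS M u ω) ω := by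
  by_cases h4 : ω ∈ G4 M u t
  · rw [Set.indicator_of_mem h4]
    obtain ⟨hA, hB⟩ := h4
    have hZt : Z M u t ω = M t ω / cS M u ω := by
      rw [Z, if_pos hA, rhoN, if_neg hB]
    have hA1 : ∃ s, s ≤ t + 1 ∧ hitA M u s ω := by
      obtain ⟨s, hs, h⟩ := hA; exact ⟨s, by omega, h⟩
    have hrhoN : rhoN M u (t + 1) ω = t + 1 := by
      rw [rhoN]
      split
      · rename_i h
        obtain ⟨s, hs, hsB⟩ := h
        have h1 : rho M u ω ≤ t + 1 := le_trans (rho_le hsB) hs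
        have h2 : ¬ rho M u ω ≤ t := fun hle => hB ⟨rho M u ω, hle, rho_mem ⟨s, hsB⟩⟩
        omega
      · rfl
    have hZt1 : Z M u (t + 1) ω = M (t + 1) ω / cS M u ω := by
      rw [Z, if_pos hA1, hrhoN]
    rw [hZt, hZt1, div_sub_div_same]
  · rw [Set.indicator_of_notMem h4]
    have hkey : Z M u (t + 1) ω ≤ Z M u t ω := by
      by_cases hA1 : ∃ s, s ≤ t + 1 ∧ hitA M u s ω
      · by_cases hAt : ∃ s, s ≤ t ∧ hitA M u s ω
        · have hBt : ∃ s, s ≤ t ∧ hitB M u s ω := by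
            by_contra h; exact h4 ⟨hAt, h⟩
          have hBt1 : ∃ s, s ≤ t + 1 ∧ hitB M u s ω := by
            obtain ⟨s, hs, h⟩ := hBt; exact ⟨s, by omega, h⟩
          rw [Z, if_pos hA1, Z, if_pos hAt, rhoN, if_pos hBt1, rhoN, if_pos hBt]
        · -- σ = t+1
          obtain ⟨s, hs, hA⟩ := hA1
          have hst : s = t + 1 := by
            rcases Nat.lt_succ_iff_lt_or_eq.mp (Nat.lt_succ_of_le hs) with h | h
            · exact absurd ⟨s, Nat.lt_succ_iff.mp h, hA⟩ hAt
            · exact h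
          subst hst
          have hsig : sig M u ω = t + 1 := by
            refine le_antisymm (sig_le hA) ?_
            by_contra h
            push_neg at h
            have hmem : hitA M u (sig M u ω) ω := sig_mem ⟨t + 1, hA⟩
            exact hAt ⟨sig M u ω, by omega, hmem⟩
          have hc : cS M u ω = runMax M (t + 1) ω := by rw [cS, hsig]
          have hS1 : (1 : ℝ) ≤ runMax M (t + 1) ω := one_le_runMax M hone _ ω
          have hnoB : ¬ ∃ s', s' ≤ t + 1 ∧ hitB M u s' ω := by
            rintro ⟨s', hs', hBs⟩
            have hseq : s' = t + 1 := by
              have := hBs.2.1; omega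
            subst hseq
            have h1 : cS M u ω ≤ M (t + 1) ω := hBs.2.2
            rw [hc] at h1
            have h2 : M (t + 1) ω ≤ u * runMax M (t + 1) ω := hA
            nlinarith
          have hZt : Z M u t ω = u := by rw [Z, if_neg hAt]
          rw [Z, if_pos ⟨t + 1, le_rfl, hA⟩, rhoN, if_neg hnoB, hZt, hc]
          rw [div_le_iff₀ (runMax_pos M hone _ ω)]
          exact hA
      · have hAt : ¬ ∃ s, s ≤ t ∧ hitA M u s ω := by
          rintro ⟨s, hs, h⟩; exact hA1 ⟨s, by omega, h⟩
        rw [Z, if_neg hA1, Z, if_neg hAt]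
    linarith

/-! ### Measurability -/

section Meas

variable {m0 : MeasurableSpace Ω}

lemma measurable_sInf' {p : ℕ → Ω → Prop} (hp : ∀ n, MeasurableSet {ω | p n ω}) :
    Measurable (fun ω => sInf {t | p t ω}) := by
  apply measurable_to_countable'
  intro k
  have hset : (fun ω => sInf {t | p t ω}) ⁻¹' {k} =
      (({ω | p k ω} ∩ ⋂ j, ⋂ _ : j < k, {ω | p j ω}ᶜ) ∪
        ({_ω : Ω | k = 0} ∩ ⋂ j, {ω | p j ω}ᶜ)) := by
    ext ω
    simp only [Set.mem_preimage, Set.mem_singleton_iff, Set.mem_union, Set.mem_inter_iff,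
      Set.mem_iInter, Set.mem_setOf_eq, Set.mem_compl_iff]
    constructor
    · intro hk
      by_cases h : ∃ t, p t ω
      · left
        refine ⟨hk ▸ Nat.sInf_mem h, fun j hj hpj => ?_⟩
        have := Nat.sInf_le (s := {t | p t ω}) hpj
        omega
      · right
        have he : {t | p t ω} = ∅ := by
          ext t; simp only [Set.mem_setOf_eq, Set.mem_empty_iff_false, iff_false]
          exact fun ht => h ⟨t, ht⟩
        refine ⟨by rw [← hk, he, Nat.sInf_empty], fun j hpj => h ⟨j, hpj⟩⟩
    · rintro (⟨hpk, hmin⟩ | ⟨hk0, hnone⟩)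
      · refine le_antisymm (Nat.sInf_le hpk) ?_
        by_contra h
        push_neg at h
        have hmem : sInf {t | p t ω} ∈ {t | p t ω} := Nat.sInf_mem ⟨k, hpk⟩
        exact hmin _ h hmem
      · have he : {t | p t ω} = ∅ := Set.eq_empty_iff_forall_notMem.mpr hnone
        rw [he, Nat.sInf_empty]
        exact hk0.symm
  rw [hset]
  exact ((hp k).inter (MeasurableSet.iInter fun j => MeasurableSet.iInter fun _ =>
      (hp j).compl)).union ((MeasurableSet.const _).inter
      (MeasurableSet.iInter fun j => (hp j).compl))

lemma measurable_nat_elim {β : Type*} [MeasurableSpace β] {f : ℕ → Ω → β}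
    (hf : ∀ n, Measurable (f n)) {g : Ω → ℕ} (hg : Measurable g) :
    Measurable fun ω => f (g ω) ω := by
  intro s hs
  have hset : (fun ω => f (g ω) ω) ⁻¹' s = ⋃ n, (g ⁻¹' {n} ∩ f n ⁻¹' s) := by
    ext ω
    simp only [Set.mem_preimage, Set.mem_iUnion, Set.mem_inter_iff, Set.mem_singleton_iff]
    constructor
    · intro h; exact ⟨g ω, rfl, h⟩
    · rintro ⟨n, hn, h⟩; exact hn ▸ h
  rw [hset]
  exact MeasurableSet.iUnion fun n => (hg (measurableSet_singleton n)).inter (hf n hs)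

variable (ℱ : Filtration ℕ m0)

lemma measurable_M_F (hadp : Adapted ℱ M) {s t : ℕ} (h : s ≤ t) :
    Measurable[ℱ t] (M s) :=
  (Measurable.mono (hadp s)) (ℱ.mono h) le_rfl

lemma measurable_runMax_F (hadp : Adapted ℱ M) (t : ℕ) :
    Measurable[ℱ t] (fun ω => runMax M t ω) := by
  induction t with
  | zero => simpa [runMax_zero] using (hadp 0)
  | succ t ih =>
      simp only [runMax_succ]
      exact Measurable.max (hadp (t + 1)) (ih.mono (ℱ.mono (Nat.le_succ t)) le_rfl)

lemma measurableSet_hitA_F (hadp : Adapted ℱ M) {s t : ℕ} (h : s ≤ t) :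
    MeasurableSet[ℱ t] {ω | hitA M u s ω} :=
  measurableSet_le (measurable_M_F ℱ hadp h)
    (measurable_const.mul ((measurable_runMax_F ℱ hadp s).mono (ℱ.mono h) le_rfl))

/-- `σ = k` (and `σ` is a genuine hitting time). -/
def sigIs (M : ℕ → Ω → ℝ) (u : ℝ) (k : ℕ) (ω : Ω) : Prop :=
  hitA M u k ω ∧ ∀ j, j < k → ¬ hitA M u j ω

lemma sigIs_iff {k : ℕ} {ω : Ω} :
    sigIs M u k ω ↔ hitA M u (sig M u ω) ω ∧ sig M u ω = k := by
  constructor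
  · rintro ⟨h1, h2⟩
    have hk : sig M u ω = k := by
      refine le_antisymm (sig_le h1) ?_
      by_contra h
      push_neg at h
      exact h2 _ h (sig_mem ⟨k, h1⟩)
    exact ⟨hk ▸ h1, hk⟩
  · rintro ⟨h1, h2⟩
    refine ⟨h2 ▸ h1, fun j hj hA => ?_⟩
    have := sig_le hA
    omega

lemma measurableSet_sigIs_F (hadp : Adapted ℱ M) {k t : ℕ} (h : k ≤ t) :
    MeasurableSet[ℱ t] {ω | sigIs M u k ω} := by
  have hset : {ω | sigIs M u k ω} =
      {ω | hitA M u k ω} ∩ ⋂ j, ⋂ _ : j < k, {ω | hitA M u j ω}ᶜ := by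
    ext ω
    simp only [sigIs, Set.mem_setOf_eq, Set.mem_inter_iff, Set.mem_iInter, Set.mem_compl_iff]
  rw [hset]
  exact (measurableSet_hitA_F ℱ hadp h).inter (MeasurableSet.iInter fun j =>
    MeasurableSet.iInter fun hj => (measurableSet_hitA_F ℱ hadp (le_trans hj.le h)).compl)

lemma measurableSet_hitB_F (hadp : Adapted ℱ M) {s t : ℕ} (h : s ≤ t) :
    MeasurableSet[ℱ t] {ω | hitB M u s ω} := by
  have hset : {ω | hitB M u s ω} =
      ⋃ k, ⋃ _ : k ≤ s, ({ω | sigIs M u k ω} ∩ {ω | runMax M k ω ≤ M s ω}) := by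
    ext ω
    simp only [Set.mem_setOf_eq, Set.mem_iUnion, Set.mem_inter_iff]
    constructor
    · rintro ⟨h1, h2, h3⟩
      exact ⟨sig M u ω, h2, sigIs_iff.mpr ⟨h1, rfl⟩, h3⟩
    · rintro ⟨k, hk, hsig, hle⟩
      obtain ⟨h1, h2⟩ := sigIs_iff.mp hsig
      exact ⟨h1, h2 ▸ hk, by rw [cS, h2]; exact hle⟩
  rw [hset]
  exact MeasurableSet.iUnion fun k => MeasurableSet.iUnion fun hk =>
    (measurableSet_sigIs_F ℱ hadp (hk.trans h)).inter
      (measurableSet_le ((measurable_runMax_F ℱ hadp k).mono (ℱ.mono (hk.trans h)) le_rfl)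
        (measurable_M_F ℱ hadp h))

lemma measurableSet_exA_F (hadp : Adapted ℱ M) (t : ℕ) :
    MeasurableSet[ℱ t] {ω | ∃ s, s ≤ t ∧ hitA M u s ω} := by
  have hset : {ω | ∃ s, s ≤ t ∧ hitA M u s ω} =
      ⋃ s, ⋃ _ : s ≤ t, {ω | hitA M u s ω} := by
    ext ω; simp only [Set.mem_setOf_eq, Set.mem_iUnion]; tauto
  rw [hset]
  exact MeasurableSet.iUnion fun s => MeasurableSet.iUnion fun hs =>
    measurableSet_hitA_F ℱ hadp hs

lemma measurableSet_exB_F (hadp : Adapted ℱ M) {n t : ℕ} (h : n ≤ t) :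
    MeasurableSet[ℱ t] {ω | ∃ s, s ≤ n ∧ hitB M u s ω} := by
  have hset : {ω | ∃ s, s ≤ n ∧ hitB M u s ω} =
      ⋃ s, ⋃ _ : s ≤ n, {ω | hitB M u s ω} := by
    ext ω; simp only [Set.mem_setOf_eq, Set.mem_iUnion]; tauto
  rw [hset]
  exact MeasurableSet.iUnion fun s => MeasurableSet.iUnion fun hs =>
    measurableSet_hitB_F ℱ hadp (hs.trans h)

lemma measurableSet_G4_F (hadp : Adapted ℱ M) (t : ℕ) :
    MeasurableSet[ℱ t] (G4 M u t) :=
  (measurableSet_exA_F ℱ hadp t).inter (measurableSet_exB_F ℱ hadp le_rfl).compl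

lemma measurable_sig (hadp : Adapted ℱ M) : Measurable[m0] (sig M u) :=
  measurable_sInf' fun n => ℱ.le n _ (measurableSet_hitA_F ℱ hadp le_rfl)

lemma measurable_rho (hadp : Adapted ℱ M) : Measurable[m0] (rho M u) :=
  measurable_sInf' fun n => ℱ.le n _ (measurableSet_hitB_F ℱ hadp le_rfl)

lemma measurable_M0 (hadp : Adapted ℱ M) (s : ℕ) : Measurable[m0] (M s) :=
  (Measurable.mono (hadp s)) (ℱ.le s) le_rfl

lemma measurable_runMax0 (hadp : Adapted ℱ M) (s : ℕ) :
    Measurable[m0] (fun ω => runMax M s ω) :=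
  (measurable_runMax_F ℱ hadp s).mono (ℱ.le s) le_rfl

lemma measurable_cS (hadp : Adapted ℱ M) : Measurable[m0] (cS M u) :=
  measurable_nat_elim (measurable_runMax0 ℱ hadp) (measurable_sig ℱ hadp)

lemma measurable_rhoN (hadp : Adapted ℱ M) (n : ℕ) : Measurable[m0] (rhoN M u n) := by
  have hset : rhoN M u n = Set.piecewise {ω | ∃ t, t ≤ n ∧ hitB M u t ω}
      (rho M u) (fun _ => n) := by
    funext ω
    by_cases h : ∃ t, t ≤ n ∧ hitB M u t ω <;>
      simp [rhoN, Set.piecewise, h]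
  rw [hset]
  exact Measurable.piecewise (ℱ.le n _ (measurableSet_exB_F ℱ hadp le_rfl))
    (measurable_rho ℱ hadp) measurable_const

lemma measurable_Z (hadp : Adapted ℱ M) (n : ℕ) : Measurable[m0] (Z M u n) := by
  have hset : Z M u n = Set.piecewise {ω | ∃ s, s ≤ n ∧ hitA M u s ω}
      (fun ω => M (rhoN M u n ω) ω / cS M u ω) (fun _ => u) := by
    funext ω
    by_cases h : ∃ s, s ≤ n ∧ hitA M u s ω <;>
      simp [Z, Set.piecewise, h]
  rw [hset]
  exact Measurable.piecewise (ℱ.le n _ (measurableSet_exA_F ℱ hadp n))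
    ((measurable_nat_elim (measurable_M0 ℱ hadp) (measurable_rhoN ℱ hadp n)).div
      (measurable_cS ℱ hadp)) measurable_const

end Meas

/-! ### Integration -/

section Integral

variable {m0 : MeasurableSpace Ω} {P : Measure Ω} [IsProbabilityMeasure P]
variable {ℱ : Filtration ℕ m0}

lemma integrable_Z (hsuper : Supermartingale M ℱ P) (hone : ∀ ω, M 0 ω = 1)
    (hnonneg : ∀ t ω, 0 ≤ M t ω) (hu : 0 ≤ u) (n : ℕ) : Integrable (Z M u n) P := by
  have hbound : Integrable (fun ω => u + ∑ s ∈ Finset.range (n + 1), M s ω) P :=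
    (integrable_const u).add (integrable_finset_sum _ fun s _ => hsuper.integrable s)
  refine hbound.mono' ((measurable_Z ℱ hsuper.stronglyAdapted.adapted n).aestronglyMeasurable) ?_
  filter_upwards with ω
  rw [Real.norm_eq_abs, abs_of_nonneg (Z_nonneg hone hnonneg hu n ω)]
  exact Z_le_bound hone hnonneg hu n ω

lemma integral_step (hsuper : Supermartingale M ℱ P) (hone : ∀ ω, M 0 ω = 1)
    (hnonneg : ∀ t ω, 0 ≤ M t ω) (hu : 0 ≤ u) (hu1 : u < 1) (t : ℕ) :
    ∫ ω, Z M u (t + 1) ω ∂P ≤ ∫ ω, Z M u t ω ∂P := by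
  classical
  set D : Ω → ℝ := fun ω => M (t + 1) ω - M t ω with hD
  set X : Ω → ℝ := fun ω => ∑ k ∈ Finset.range (t + 1),
      Set.indicator (G4 M u t ∩ {ω | sigIs M u k ω}) (fun ω => (runMax M k ω)⁻¹) ω with hXdef
  have hDint : Integrable D P := (hsuper.integrable (t + 1)).sub (hsuper.integrable t)
  -- pointwise description of X
  have hXmem : ∀ ω ∈ G4 M u t, X ω = (cS M u ω)⁻¹ := by
    intro ω hω
    have hA := hω.1
    obtain ⟨s, hs, hAs⟩ := hA
    have hsig_le : sig M u ω ≤ t := le_trans (sig_le hAs) hs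
    have hsigIs : sigIs M u (sig M u ω) ω := sigIs_iff.mpr ⟨sig_mem ⟨s, hAs⟩, rfl⟩
    show (∑ k ∈ Finset.range (t + 1),
      Set.indicator (G4 M u t ∩ {ω | sigIs M u k ω}) (fun ω => (runMax M k ω)⁻¹) ω) = _
    rw [Finset.sum_eq_single_of_mem (sig M u ω) (Finset.mem_range.mpr (Nat.lt_succ_of_le hsig_le))]
    · have hmem : ω ∈ G4 M u t ∩ {ω' | sigIs M u (sig M u ω) ω'} := ⟨hω, hsigIs⟩
      rw [Set.indicator_of_mem hmem]
      rfl
    · intro k _ hk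
      apply Set.indicator_of_notMem
      rintro ⟨-, hkIs⟩
      exact hk ((sigIs_iff.mp hkIs).2.symm ▸ rfl)
  have hXnotmem : ∀ ω, ω ∉ G4 M u t → X ω = 0 := by
    intro ω hω
    rw [hXdef]
    apply Finset.sum_eq_zero
    intro k _
    exact Set.indicator_of_notMem (fun h => hω h.1) _
  have hXnonneg : ∀ ω, 0 ≤ X ω := by
    intro ω
    rw [hXdef]
    apply Finset.sum_nonneg
    intro k _
    apply Set.indicator_nonneg
    intro ω' _
    exact inv_nonneg.mpr (runMax_pos M hone k ω').le
  have hXle1 : ∀ ω, X ω ≤ 1 := by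
    intro ω
    by_cases hω : ω ∈ G4 M u t
    · rw [hXmem ω hω]
      exact inv_le_one_of_one_le₀ (one_le_cS hone ω)
    · rw [hXnotmem ω hω]; exact zero_le_one
  -- measurability of X w.r.t. ℱ t
  have hXsm : StronglyMeasurable[ℱ t] X := by
    apply Measurable.stronglyMeasurable
    apply Finset.measurable_sum
    intro k hk
    have hk' : k ≤ t := Nat.lt_succ_iff.mp (Finset.mem_range.mp hk)
    exact Measurable.indicator
      ((measurable_runMax_F ℱ hsuper.stronglyAdapted.adapted k).mono (ℱ.mono hk') le_rfl).inv
      ((measurableSet_G4_F ℱ hsuper.stronglyAdapted.adapted t).inter (measurableSet_sigIs_F ℱ hsuper.stronglyAdapted.adapted hk'))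
  -- pointwise step bound
  have hpoint : ∀ ω, Z M u (t + 1) ω - Z M u t ω ≤ X ω * D ω := by
    intro ω
    refine le_trans (step_pointwise hone hu1 t ω) ?_
    by_cases h : ω ∈ G4 M u t
    · rw [Set.indicator_of_mem h, hXmem ω h, div_eq_mul_inv, mul_comm]
    · rw [Set.indicator_of_notMem h, hXnotmem ω h, zero_mul]
  -- integrability of X * D
  have hXD_int : Integrable (fun ω => X ω * D ω) P := by
    refine hDint.norm.mono' (((hXsm.mono (ℱ.le t)).measurable.mul
      ((measurable_M0 ℱ hsuper.stronglyAdapted.adapted (t + 1)).sub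
        (measurable_M0 ℱ hsuper.stronglyAdapted.adapted t))).aestronglyMeasurable) ?_
    filter_upwards with ω
    rw [Real.norm_eq_abs, abs_mul, abs_of_nonneg (hXnonneg ω)]
    calc X ω * |D ω| ≤ 1 * |D ω| :=
          mul_le_mul_of_nonneg_right (hXle1 ω) (abs_nonneg _)
      _ = ‖D ω‖ := by rw [one_mul, Real.norm_eq_abs]
  -- conditional expectation argument
  have hMt : P[M t|ℱ t] = M t :=
    condExp_of_stronglyMeasurable (ℱ.le t) (hsuper.stronglyAdapted t) (hsuper.integrable t)
  have hcondD : P[D|ℱ t] ≤ᵐ[P] 0 := by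
    have hsub : P[D|ℱ t] =ᵐ[P] P[M (t + 1)|ℱ t] - P[M t|ℱ t] :=
      condExp_sub (hsuper.integrable (t + 1)) (hsuper.integrable t) _
    have hle : P[M (t + 1)|ℱ t] ≤ᵐ[P] M t := hsuper.2.1 t (t + 1) (Nat.le_succ t)
    filter_upwards [hsub, hle] with ω h1 h2
    rw [Pi.zero_apply]
    rw [h1, Pi.sub_apply, hMt]
    linarith
  have hkey : ∫ ω, X ω * D ω ∂P ≤ 0 := by
    have h2 : P[fun ω => X ω * D ω|ℱ t] =ᵐ[P] fun ω => X ω * (P[D|ℱ t]) ω := by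
      have := condExp_mul_of_stronglyMeasurable_left hXsm
        (show Integrable (X * D) P from hXD_int) hDint
      filter_upwards [this] with ω hω
      exact hω
    calc ∫ ω, X ω * D ω ∂P = ∫ ω, (P[fun ω => X ω * D ω|ℱ t]) ω ∂P :=
          (integral_condExp (ℱ.le t)).symm
      _ = ∫ ω, X ω * (P[D|ℱ t]) ω ∂P := integral_congr_ae h2
      _ ≤ 0 := by
          apply integral_nonpos_of_ae
          filter_upwards [hcondD] with ω hω
          exact mul_nonpos_of_nonneg_of_nonpos (hXnonneg ω) hω
  have hZ0 := integrable_Z hsuper hone hnonneg hu t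
  have hZ1 := integrable_Z hsuper hone hnonneg hu (t + 1)
  have hdiff : ∫ ω, (Z M u (t + 1) ω - Z M u t ω) ∂P ≤ ∫ ω, X ω * D ω ∂P :=
    integral_mono (hZ1.sub hZ0) hXD_int hpoint
  rw [integral_sub hZ1 hZ0] at hdiff
  linarith

lemma integral_Z_le (hsuper : Supermartingale M ℱ P) (hone : ∀ ω, M 0 ω = 1)
    (hnonneg : ∀ t ω, 0 ≤ M t ω) (hu : 0 ≤ u) (hu1 : u < 1) (n : ℕ) :
    ∫ ω, Z M u n ω ∂P ≤ u := by
  induction n with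
  | zero =>
      have : (fun ω => Z M u 0 ω) = fun _ => u := funext (Z_zero hone hu1)
      rw [this, integral_const, probReal_univ, smul_eq_mul, one_mul]
  | succ n ih => exact le_trans (integral_step hsuper hone hnonneg hu hu1 n) ih

end Integral

end Stmt5Aux

/-- For any a.s. finite stopping time `τ ≤ τ_F` a.s., `R_τ` stochastically dominates a
uniform (0,1) random variable. -/
theorem stmt5 {Ω : Type*} {m0 : MeasurableSpace Ω} {P : Measure Ω} [IsProbabilityMeasure P]
    (ℱ : Filtration ℕ m0) (M : ℕ → Ω → ℝ)
    (hsuper : Supermartingale M ℱ P) (hnonneg : ∀ t ω, 0 ≤ M t ω)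
    (hone : ∀ ω, M 0 ω = 1)
    (τ : Ω → ℕ∞)
    (hstop : ∀ t : ℕ, MeasurableSet[ℱ t] {ω | τ ω ≤ (t : ℕ∞)})
    (hfin : ∀ᵐ ω ∂P, τ ω ≠ ⊤)
    (hleF : ∀ᵐ ω ∂P, τ ω ≤ tauF M ω) :
    ∀ u : ℝ, 0 < u → u < 1 →
      P {ω | Rproc M (τ ω).toNat ω ≤ u} ≤ ENNReal.ofReal u := by
  intro u hu0 hu1
  classical
  set En : ℕ → Set Ω := fun n => {ω | ∃ t, t ≤ n ∧ Stmt5Aux.hitB M u t ω} with hEn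
  have hEnMeas : ∀ n, MeasurableSet (En n) := fun n =>
    ℱ.le n _ (Stmt5Aux.measurableSet_exB_F ℱ hsuper.stronglyAdapted.adapted le_rfl)
  have hEnMono : Monotone En := by
    rintro a b hab ω ⟨t, ht, h⟩
    exact ⟨t, ht.trans hab, h⟩
  -- a.e. inclusion of the event into ⋃ n, En n
  have hincl : {ω | Rproc M (τ ω).toNat ω ≤ u} ≤ᵐ[P] ⋃ n, En n := by
    filter_upwards [hfin, hleF] with ω hτ hτF hR
    set n := (τ ω).toNat with hn
    have hR' : Rproc M n ω ≤ u := hR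
    rw [Rproc] at hR'
    obtain ⟨s, hs_mem, hsle⟩ := (Finset.inf'_le_iff _).mp hR'
    have hsn : s ≤ n := Nat.lt_succ_iff.mp (Finset.mem_range.mp hs_mem)
    have hAs : Stmt5Aux.hitA M u s ω :=
      (div_le_iff₀ (Stmt5Aux.runMax_pos M hone s ω)).mp hsle
    have hsig_le : Stmt5Aux.sig M u ω ≤ n := le_trans (Stmt5Aux.sig_le hAs) hsn
    have hsig_mem : Stmt5Aux.hitA M u (Stmt5Aux.sig M u ω) ω := Stmt5Aux.sig_mem ⟨s, hAs⟩
    have hsig_pos : Stmt5Aux.sig M u ω ≠ 0 := by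
      intro h0
      rw [h0] at hsig_mem
      exact Stmt5Aux.not_hitA_zero hone hu1 ω hsig_mem
    have hn1 : 1 ≤ n := by omega
    have hτcoe : τ ω = (n : ℕ∞) := (ENat.coe_toNat hτ).symm
    have htF : (n : ℕ∞) ≤ tauF M ω := hτcoe ▸ hτF
    have hex : ∃ s', n ≤ s' ∧ M s' ω = runMax M s' ω := by
      by_contra hno
      push_neg at hno
      have hbound : tauF M ω ≤ ((n - 1 : ℕ) : ℕ∞) := by
        rw [tauF]
        apply iSup₂_le
        intro i hi
        have hieq : M i ω = runMax M i ω := hi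
        have hlt : i < n := by
          by_contra hcon
          push_neg at hcon
          exact hno i hcon hieq
        exact Nat.cast_le.mpr (by omega)
      have hfinal : (n : ℕ∞) ≤ ((n - 1 : ℕ) : ℕ∞) := le_trans htF hbound
      have := Nat.cast_le.mp hfinal
      omega
    obtain ⟨s', hns', hMs'⟩ := hex
    refine Set.mem_iUnion.mpr ⟨s', s', le_rfl, ?_⟩
    refine ⟨hsig_mem, hsig_le.trans hns', ?_⟩
    calc Stmt5Aux.cS M u ω ≤ runMax M s' ω :=
          Stmt5Aux.runMax_mono M (hsig_le.trans hns') ω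
      _ = M s' ω := hMs'.symm
  have hPEn : ∀ n, P (En n) ≤ ENNReal.ofReal u := by
    intro n
    have hint := Stmt5Aux.integrable_Z hsuper hone hnonneg hu0.le n
    have hZle := Stmt5Aux.integral_Z_le hsuper hone hnonneg hu0.le hu1 n
    have hind : ∀ ω, Set.indicator (En n) (fun _ => (1 : ℝ)) ω ≤ Stmt5Aux.Z M u n ω := by
      intro ω
      by_cases h : ω ∈ En n
      · rw [Set.indicator_of_mem h]
        exact Stmt5Aux.Z_ge_one hone h
      · rw [Set.indicator_of_notMem h]
        exact Stmt5Aux.Z_nonneg hone hnonneg hu0.le n ω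
    have hmono : ∫ ω, Set.indicator (En n) (fun _ => (1 : ℝ)) ω ∂P ≤
        ∫ ω, Stmt5Aux.Z M u n ω ∂P :=
      integral_mono ((integrable_const (1 : ℝ)).indicator (hEnMeas n)) hint hind
    rw [integral_indicator_const (1 : ℝ) (hEnMeas n), smul_eq_mul, mul_one] at hmono
    have h1 : (P (En n)).toReal ≤ u := le_trans hmono hZle
    rw [← ENNReal.ofReal_toReal (measure_ne_top P (En n))]
    exact ENNReal.ofReal_le_ofReal h1
  calc P {ω | Rproc M (τ ω).toNat ω ≤ u} ≤ P (⋃ n, En n) := measure_mono_ae hincl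
    _ = ⨆ n, P (En n) := hEnMono.directed_le.measure_iUnion
    _ ≤ ENNReal.ofReal u := iSup_le hPEn
end

section
/- Each Y_t is integrable, and the Azéma–Yor process Y = (Y_t)_{t∈ℕ} is a supermartingale. -/
open MeasureTheory Filter Set
/-- The ultimate supremum `S_∞ = sup_t M_t`. -/
noncomputable def supAll {Ω : Type*} (M : ℕ → Ω → ℝ) (ω : Ω) : ℝ :=
  ⨆ t : ℕ, M t ω

/-- `𝒢 s = ∫_0^1 g(s/u) du`. -/
noncomputable def calG (g : ℝ → ℝ) (s : ℝ) : ℝ :=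
  ∫ u in Set.Ioc (0 : ℝ) 1, g (s / u)

/-- `𝒢′ s = ∫_s^∞ (g(x) − g(s))/x² dx`. -/
noncomputable def calG' (g : ℝ → ℝ) (s : ℝ) : ℝ :=
  ∫ x in Set.Ioi s, (g x - g s) / x ^ 2

/-- The Azéma–Yor process `Y t = 𝒢(S t) − (S t − M t)·𝒢′(S t)`. -/
noncomputable def ayProc {Ω : Type*} (g : ℝ → ℝ) (M : ℕ → Ω → ℝ) (t : ℕ) (ω : Ω) : ℝ :=
  calG g (runMax M t ω) - (runMax M t ω - M t ω) * calG' g (runMax M t ω)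



lemma intOnInvSq {s : ℝ} (hs : 0 < s) : IntegrableOn (fun x : ℝ => (x ^ 2)⁻¹) (Ioi s) := by
  have h := integrableOn_Ioi_rpow_of_lt (a := (-2:ℝ)) (by norm_num) hs
  refine h.congr_fun (fun x hx => ?_) measurableSet_Ioi
  show x ^ (-2:ℝ) = (x ^ 2)⁻¹
  rw [Real.rpow_neg (le_of_lt (hs.trans hx)), Real.rpow_two]

lemma intInvSq {s : ℝ} (hs : 0 < s) : ∫ x in Ioi s, (x ^ 2)⁻¹ = s⁻¹ := by
  have h := integral_Ioi_rpow_of_lt (a := (-2:ℝ)) (by norm_num) hs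
  rw [show ∫ x in Ioi s, (x^2)⁻¹ = ∫ x in Ioi s, x ^ (-2:ℝ) from
    setIntegral_congr_fun measurableSet_Ioi (fun x hx => by
      rw [Real.rpow_neg (le_of_lt (hs.trans hx)), Real.rpow_two]), h]
  norm_num
  rw [Real.rpow_neg_one]

section G
variable {g : ℝ → ℝ}
  (hg0 : ∀ x ∈ Set.Ioi (0 : ℝ), 0 ≤ g x)
  (hmono : MonotoneOn g (Set.Ioi 0))
  (hint : ∀ a ∈ Set.Ioi (0 : ℝ), IntegrableOn (fun x => g x / x ^ 2) (Set.Ioi a))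

/-- F s := ∫ x in Ioi s, g x / x ^ 2 -/
noncomputable def Fg (g : ℝ → ℝ) (s : ℝ) : ℝ := ∫ x in Ioi s, g x / x ^ 2

include hint in
lemma intOn_sub {s : ℝ} (hs : 0 < s) :
    IntegrableOn (fun x => (g x - g s) / x ^ 2) (Ioi s) := by
  have h1 := hint s hs
  have h2 := (intOnInvSq hs).const_mul (g s)
  refine Integrable.congr (h1.sub h2) ?_
  filter_upwards [ae_restrict_mem measurableSet_Ioi] with x hx
  have hx0 : x ≠ 0 := ne_of_gt (hs.trans hx)
  simp only [Pi.sub_apply]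
  field_simp

include hmono in
lemma calG'_nonneg {s : ℝ} (hs : 0 < s) : 0 ≤ calG' g s := by
  refine setIntegral_nonneg measurableSet_Ioi (fun x hx => ?_)
  have hx0 : (0:ℝ) < x := hs.trans hx
  have h1 : g s ≤ g x := hmono hs hx0 (le_of_lt hx)
  have h2 : (0:ℝ) < x ^ 2 := by positivity
  exact div_nonneg (by linarith) h2.le

include hint in
lemma calG'_eq {s : ℝ} (hs : 0 < s) : calG' g s = Fg g s - g s * s⁻¹ := by
  have h1 := hint s hs
  have h2 := (intOnInvSq hs).const_mul (g s)
  have : calG' g s = ∫ x in Ioi s, (g x / x ^ 2 - g s * (x ^ 2)⁻¹) := by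
    refine setIntegral_congr_fun measurableSet_Ioi (fun x hx => ?_)
    have hx0 : x ≠ 0 := ne_of_gt (hs.trans hx)
    field_simp
  rw [this, integral_sub h1 h2, MeasureTheory.integral_const_mul, intInvSq hs]
  rfl

include hg0 in
lemma Fg_nonneg {s : ℝ} (hs : 0 < s) : 0 ≤ Fg g s := by
  refine setIntegral_nonneg measurableSet_Ioi (fun x hx => ?_)
  have hx0 : (0:ℝ) < x := hs.trans hx
  have := hg0 x hx0
  positivity

include hint in
lemma Fg_sub {s s' : ℝ} (hs : 0 < s) (h : s ≤ s') :
    Fg g s - Fg g s' = ∫ x in Ioc s s', g x / x ^ 2 := by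
  have hs' : 0 < s' := hs.trans_le h
  have hu : Ioc s s' ∪ Ioi s' = Ioi s := Ioc_union_Ioi_eq_Ioi h
  have hdisj : Disjoint (Ioc s s') (Ioi s') := by
    simp [Set.disjoint_left]
  have h1 : IntegrableOn (fun x => g x / x ^ 2) (Ioc s s') :=
    (hint s hs).mono_set (fun x hx => hx.1)
  have h2 : IntegrableOn (fun x => g x / x ^ 2) (Ioi s') := hint s' hs'
  have := setIntegral_union hdisj measurableSet_Ioi h1 h2
  rw [hu] at this
  show (∫ x in Ioi s, g x / x ^ 2) - Fg g s' = _
  rw [this]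
  show _ - (∫ x in Ioi s', g x / x ^ 2) = _
  ring


include hg0 hint in
lemma Fg_antitone {s s' : ℝ} (hs : 0 < s) (h : s ≤ s') : Fg g s' ≤ Fg g s := by
  have hs' : 0 < s' := hs.trans_le h
  have := Fg_sub hint hs h
  have hnn : (0:ℝ) ≤ ∫ x in Ioc s s', g x / x ^ 2 := by
    refine setIntegral_nonneg measurableSet_Ioc (fun x hx => ?_)
    have hx0 : (0:ℝ) < x := hs.trans hx.1
    have := hg0 x hx0
    positivity
  linarith

include hint in
lemma intIocInvSq {s s' : ℝ} (hs : 0 < s) (h : s ≤ s') :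
    ∫ x in Ioc s s', (x ^ 2)⁻¹ = s⁻¹ - s'⁻¹ := by
  have hs' : 0 < s' := hs.trans_le h
  have hu : Ioc s s' ∪ Ioi s' = Ioi s := Ioc_union_Ioi_eq_Ioi h
  have hdisj : Disjoint (Ioc s s') (Ioi s') := by simp [Set.disjoint_left]
  have h1 : IntegrableOn (fun x : ℝ => (x ^ 2)⁻¹) (Ioc s s') :=
    (intOnInvSq hs).mono_set (fun x hx => hx.1)
  have h2 := intOnInvSq hs'
  have := setIntegral_union hdisj measurableSet_Ioi h1 h2
  rw [hu, intInvSq hs, intInvSq hs'] at this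
  linarith

include hg0 hmono hint in
lemma Fg_sub_ge {s s' : ℝ} (hs : 0 < s) (h : s ≤ s') :
    g s * (s⁻¹ - s'⁻¹) ≤ Fg g s - Fg g s' := by
  have hs' : 0 < s' := hs.trans_le h
  rw [Fg_sub hint hs h]
  have h1 : IntegrableOn (fun x : ℝ => g s * (x ^ 2)⁻¹) (Ioc s s') :=
    ((intOnInvSq hs).mono_set (fun x hx => hx.1)).const_mul _
  have h2 : IntegrableOn (fun x => g x / x ^ 2) (Ioc s s') :=
    (hint s hs).mono_set (fun x hx => hx.1)
  have hle : ∫ x in Ioc s s', g s * (x ^ 2)⁻¹ ≤ ∫ x in Ioc s s', g x / x ^ 2 := by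
    refine setIntegral_mono_on h1 h2 measurableSet_Ioc (fun x hx => ?_)
    have hx0 : (0:ℝ) < x := hs.trans hx.1
    have hgx : g s ≤ g x := hmono hs hx0 (le_of_lt hx.1)
    rw [div_eq_mul_inv]
    have : (0:ℝ) ≤ (x ^ 2)⁻¹ := by positivity
    exact mul_le_mul_of_nonneg_right hgx this
  calc g s * (s⁻¹ - s'⁻¹) = ∫ x in Ioc s s', g s * (x ^ 2)⁻¹ := by
        rw [MeasureTheory.integral_const_mul, intIocInvSq hint hs h]
    _ ≤ _ := hle

section CV
variable {g : ℝ → ℝ} {s : ℝ}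

lemma img (hs : 0 < s) : (fun x : ℝ => s / x) '' Ioi s = Ioo 0 1 := by
  ext u
  constructor
  · rintro ⟨x, hx, rfl⟩
    have hx0 : (0:ℝ) < x := hs.trans hx
    exact ⟨div_pos hs hx0, (div_lt_one hx0).mpr hx⟩
  · rintro ⟨hu0, hu1⟩
    refine ⟨s / u, ?_, ?_⟩
    · exact (lt_div_iff₀ hu0).mpr (by nlinarith)
    · field_simp
lemma injOn (hs : 0 < s) : InjOn (fun x : ℝ => s / x) (Ioi s) := by
  intro x hx y hy hxy
  have hx0 : (0:ℝ) < x := hs.trans hx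
  have hy0 : (0:ℝ) < y := hs.trans hy
  field_simp at hxy
  exact hxy.symm
lemma hderiv (hs : 0 < s) : ∀ x ∈ Ioi s, HasDerivWithinAt (fun x : ℝ => s / x)
    (-(s * (x ^ 2)⁻¹)) (Ioi s) x := by
  intro x hx
  have hx0 : x ≠ 0 := ne_of_gt (hs.trans hx)
  have h := ((hasDerivAt_inv hx0).const_mul s).hasDerivWithinAt (s := Ioi s)
  have h2 := h.congr (fun y _ => (div_eq_mul_inv s y).symm ▸ rfl) (div_eq_mul_inv s x)
  rw [mul_neg] at h2
  exact h2


lemma calG_eq' (hs : 0 < s) :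
    (∫ u in Ioc (0:ℝ) 1, g (s / u)) = s * ∫ x in Ioi s, g x / x ^ 2 := by
  have h1 : (∫ u in Ioc (0:ℝ) 1, g (s / u)) = ∫ u in Ioo (0:ℝ) 1, g (s / u) :=
    integral_Ioc_eq_integral_Ioo
  have h2 := integral_image_eq_integral_abs_deriv_smul measurableSet_Ioi
    (hderiv hs) (injOn hs) (fun u => g (s / u))
  rw [img hs] at h2
  rw [h1, h2, ← MeasureTheory.integral_const_mul]
  refine setIntegral_congr_fun measurableSet_Ioi (fun x hx => ?_)
  have hx0 : (0:ℝ) < x := hs.trans hx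
  have hxx : s / (s / x) = x := by field_simp
  simp only [hxx, smul_eq_mul, abs_neg, abs_mul, abs_of_pos hs, abs_inv,
    abs_of_pos (by positivity : (0:ℝ) < x^2)]
  field_simp

lemma calG_intOn (hs : 0 < s)
    (hint : IntegrableOn (fun x => g x / x ^ 2) (Set.Ioi s)) :
    IntegrableOn (fun u => g (s / u)) (Ioc (0:ℝ) 1) := by
  have h2 := integrableOn_image_iff_integrableOn_abs_deriv_smul measurableSet_Ioi
    (hderiv hs) (injOn hs) (fun u => g (s / u))
  rw [img hs] at h2
  have hOo : IntegrableOn (fun u => g (s / u)) (Ioo (0:ℝ) 1) := by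
    refine h2.mpr ?_
    refine (hint.const_mul s).congr ?_
    filter_upwards [ae_restrict_mem measurableSet_Ioi] with x hx
    have hx0 : (0:ℝ) < x := hs.trans hx
    have hxx : s / (s / x) = x := by field_simp
    simp only [hxx, smul_eq_mul, abs_neg, abs_mul, abs_of_pos hs, abs_inv,
      abs_of_pos (by positivity : (0:ℝ) < x^2)]
    field_simp
  exact hOo.congr_set_ae Ioo_ae_eq_Ioc.symm
end CV


lemma calG_val {s : ℝ} (hs : 0 < s) : calG g s = s * Fg g s := calG_eq' hs

include hg0 hint in
lemma calG_nonneg {s : ℝ} (hs : 0 < s) : 0 ≤ calG g s := by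
  rw [calG_val hs]; exact mul_nonneg hs.le (Fg_nonneg hg0 hs)

include hmono hint in
lemma calG_mono {s s' : ℝ} (hs : 0 < s) (h : s ≤ s') : calG g s ≤ calG g s' := by
  have hs' : 0 < s' := hs.trans_le h
  unfold calG
  refine setIntegral_mono_on (calG_intOn hs (hint s hs)) (calG_intOn hs' (hint s' hs'))
    measurableSet_Ioc (fun u hu => ?_)
  have hu0 : (0:ℝ) < u := hu.1
  have h1 : (0:ℝ) < s / u := div_pos hs hu0
  have h2 : s / u ≤ s' / u := by gcongr
  exact hmono h1 (h1.trans_le h2) h2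

include hmono hint in
lemma calG'_antitone {s s' : ℝ} (hs : 0 < s) (h : s ≤ s') : calG' g s' ≤ calG' g s := by
  have hs' : 0 < s' := hs.trans_le h
  have step1 : calG' g s' ≤ ∫ x in Ioi s', (g x - g s) / x ^ 2 := by
    refine setIntegral_mono_on (intOn_sub hint hs')
      ((intOn_sub hint hs).mono_set (Ioi_subset_Ioi h)) measurableSet_Ioi (fun x hx => ?_)
    have hx0 : (0:ℝ) < x := hs'.trans hx
    have hss : g s ≤ g s' := hmono hs hs' h
    gcongr
  have step2 : (∫ x in Ioi s', (g x - g s) / x ^ 2) ≤ ∫ x in Ioi s, (g x - g s) / x ^ 2 := by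
    refine setIntegral_mono_set (intOn_sub hint hs) ?_
      (HasSubset.Subset.eventuallyLE (Ioi_subset_Ioi h))
    filter_upwards [ae_restrict_mem measurableSet_Ioi] with x hx
    have hx0 : (0:ℝ) < x := hs.trans hx
    have h3 : g s ≤ g x := hmono hs hx0 hx.le
    have h4 : (0:ℝ) < x ^ 2 := by positivity
    exact div_nonneg (by linarith) h4.le
  exact step1.trans step2

include hg0 hmono hint in
lemma keyIneq {s m' : ℝ} (hs : 0 < s) (h : s < m') :
    calG g m' ≤ calG g s + (m' - s) * calG' g s := by
  have hm' : 0 < m' := hs.trans h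
  rw [calG_val hs, calG_val hm', calG'_eq hint hs]
  have hsub := Fg_sub_ge hg0 hmono hint hs h.le
  have hgs : 0 ≤ g s := hg0 s hs
  have h1 : m' * (g s * (s⁻¹ - m'⁻¹)) ≤ m' * (Fg g s - Fg g m') :=
    mul_le_mul_of_nonneg_left hsub hm'.le
  have e1 : m' * (g s * (s⁻¹ - m'⁻¹)) = g s * (m' - s) * s⁻¹ := by
    field_simp
  rw [e1] at h1
  nlinarith [h1]
end G

/-- Each `Y t` is integrable and the Azéma–Yor process is a supermartingale. -/
theorem stmt11 {Ω : Type*} {m0 : MeasurableSpace Ω} {P : Measure Ω} [IsProbabilityMeasure P]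
    (ℱ : Filtration ℕ m0) (M : ℕ → Ω → ℝ)
    (hsuper : Supermartingale M ℱ P) (hnonneg : ∀ t ω, 0 ≤ M t ω)
    (hone : ∀ ω, M 0 ω = 1)
    (g : ℝ → ℝ)
    (hg0 : ∀ x ∈ Set.Ioi (0 : ℝ), 0 ≤ g x)
    (hmono : MonotoneOn g (Set.Ioi 0))
    (hint : ∀ a ∈ Set.Ioi (0 : ℝ), IntegrableOn (fun x => g x / x ^ 2) (Set.Ioi a)) :
    (∀ t : ℕ, Integrable (ayProc g M t) P)
    ∧ Supermartingale (ayProc g M) ℱ P := by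
  -- running max basic facts
  have hSrec : ∀ t ω, runMax M (t + 1) ω = max (M (t + 1) ω) (runMax M t ω) := by
    intro t ω
    unfold runMax
    apply le_antisymm
    · refine Finset.sup'_le _ _ (fun b hb => ?_)
      rcases Finset.mem_range_succ_iff.mp hb |>.lt_or_eq with hlt | heq
      · exact le_max_of_le_right (Finset.le_sup' (fun s => M s ω) (Finset.mem_range.mpr hlt))
      · rw [heq]; exact le_max_left _ _
    · refine max_le (Finset.le_sup' (fun s => M s ω) (Finset.mem_range.mpr (Nat.lt_succ_self (t+1)))) ?_
      refine Finset.sup'_le _ _ (fun b hb => ?_)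
      exact Finset.le_sup' (fun s => M s ω) (Finset.mem_range.mpr ((Finset.mem_range.mp hb).trans (Nat.lt_succ_self (t+1))))
  have hS1 : ∀ t ω, 1 ≤ runMax M t ω := by
    intro t ω
    have := Finset.le_sup' (fun s => M s ω)
      (Finset.mem_range.mpr (Nat.succ_pos t) : 0 ∈ Finset.range (t + 1))
    rwa [hone ω] at this
  have hS0 : ∀ t ω, 0 < runMax M t ω := fun t ω => lt_of_lt_of_le one_pos (hS1 t ω)
  have hSM : ∀ t ω, M t ω ≤ runMax M t ω := by
    intro t ω
    exact Finset.le_sup' (fun s => M s ω)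
      (Finset.mem_range.mpr (Nat.lt_succ_self t))
  have hS_meas : ∀ t, Measurable[ℱ t] (runMax M t) := by
    intro t
    induction t with
    | zero =>
      have : runMax M 0 = M 0 := by
        funext ω; unfold runMax; simp
      rw [this]
      exact (hsuper.stronglyAdapted 0).measurable
    | succ n ih =>
      have : runMax M (n + 1) = fun ω => max (M (n + 1) ω) (runMax M n ω) := by
        funext ω; exact hSrec n ω
      rw [this]
      exact ((hsuper.stronglyAdapted (n + 1)).measurable).max (ih.mono (ℱ.mono n.le_succ) le_rfl)
  -- monotone envelopes for measurability
  set G1 : ℝ → ℝ := fun x => calG g (max 1 x) with hG1def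
  set G2 : ℝ → ℝ := fun x => calG' g (max 1 x) with hG2def
  have hG1mono : Monotone G1 := fun a b hab =>
    calG_mono hmono hint (lt_of_lt_of_le one_pos (le_max_left 1 a)) (max_le_max le_rfl hab)
  have hG2anti : Antitone G2 := fun a b hab =>
    calG'_antitone hmono hint (lt_of_lt_of_le one_pos (le_max_left 1 a)) (max_le_max le_rfl hab)
  have hmax : ∀ t ω, max 1 (runMax M t ω) = runMax M t ω := fun t ω => max_eq_right (hS1 t ω)
  have hYeq : ∀ t ω, ayProc g M t ω =
      G1 (runMax M t ω) - (runMax M t ω - M t ω) * G2 (runMax M t ω) := by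
    intro t ω
    simp only [ayProc, hG1def, hG2def, hmax t ω]
  have hYmeas : ∀ t, StronglyMeasurable[ℱ t] (ayProc g M t) := by
    intro t
    have hm : Measurable[ℱ t] (fun ω =>
        G1 (runMax M t ω) - (runMax M t ω - M t ω) * G2 (runMax M t ω)) :=
      (hG1mono.measurable.comp (hS_meas t)).sub
        (((hS_meas t).sub (hsuper.stronglyAdapted t).measurable).mul
          (hG2anti.measurable.comp (hS_meas t)))
    have : ayProc g M t = fun ω =>
        G1 (runMax M t ω) - (runMax M t ω - M t ω) * G2 (runMax M t ω) := funext (hYeq t)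
    rw [this]
    exact hm.stronglyMeasurable
  -- bounds
  set C1 : ℝ := Fg g 1 with hC1def
  set C2 : ℝ := calG' g 1 with hC2def
  have hC1nn : 0 ≤ C1 := Fg_nonneg hg0 one_pos
  have hC2nn : 0 ≤ C2 := calG'_nonneg hmono one_pos
  have hG'bd : ∀ t ω, calG' g (runMax M t ω) ≤ C2 := fun t ω =>
    calG'_antitone hmono hint one_pos (hS1 t ω)
  have hG'nn : ∀ t ω, 0 ≤ calG' g (runMax M t ω) := fun t ω => calG'_nonneg hmono (hS0 t ω)
  have hYbd : ∀ t ω, |ayProc g M t ω| ≤ runMax M t ω * (C1 + C2) := by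
    intro t ω
    set s := runMax M t ω
    have hs0 : 0 < s := hS0 t ω
    have h1a : 0 ≤ calG g s := calG_nonneg hg0 hint hs0
    have h1b : calG g s ≤ s * C1 := by
      rw [calG_val hs0]
      exact mul_le_mul_of_nonneg_left (Fg_antitone hg0 hint one_pos (hS1 t ω)) hs0.le
    have h2a : 0 ≤ (s - M t ω) * calG' g s :=
      mul_nonneg (by linarith [hSM t ω]) (hG'nn t ω)
    have h2b : (s - M t ω) * calG' g s ≤ s * C2 := by
      have : s - M t ω ≤ s := by linarith [hnonneg t ω]
      exact mul_le_mul this (hG'bd t ω) (hG'nn t ω) hs0.le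
    rw [abs_le]
    constructor <;> [skip; skip] <;> simp only [ayProc] <;> nlinarith
  have hSsum : ∀ t ω, runMax M t ω ≤ ∑ s ∈ Finset.range (t + 1), M s ω := by
    intro t ω
    unfold runMax
    refine Finset.sup'_le _ _ (fun b hb => ?_)
    exact Finset.single_le_sum (fun i _ => hnonneg i ω) hb
  have hYint : ∀ t, Integrable (ayProc g M t) P := by
    intro t
    refine Integrable.mono'
      ((integrable_finset_sum (Finset.range (t + 1)) (fun k _ => hsuper.integrable k)).mul_const
        (C1 + C2)) (((hYmeas t).mono (ℱ.le t)).aestronglyMeasurable) ?_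
    refine Filter.Eventually.of_forall (fun ω => ?_)
    rw [Real.norm_eq_abs]
    refine (hYbd t ω).trans ?_
    exact mul_le_mul_of_nonneg_right (hSsum t ω) (by linarith)
  -- pathwise key inequality
  have hkey : ∀ t ω, ayProc g M (t + 1) ω ≤
      ayProc g M t ω + calG' g (runMax M t ω) * (M (t + 1) ω - M t ω) := by
    intro t ω
    set s := runMax M t ω with hsdef
    have hs0 : 0 < s := hS0 t ω
    rcases le_or_gt (M (t + 1) ω) s with h | h
    · have hS' : runMax M (t + 1) ω = s := by rw [hSrec t ω, max_eq_right h]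
      simp only [ayProc, hS']
      ring_nf
      exact le_of_eq (by ring)
    · have hS' : runMax M (t + 1) ω = M (t + 1) ω := by rw [hSrec t ω, max_eq_left h.le]
      have hk := keyIneq hg0 hmono hint hs0 h
      simp only [ayProc, hS']
      nlinarith [hk]
  -- supermartingale property
  have hadp : StronglyAdapted ℱ (ayProc g M) := fun t => hYmeas t
  refine ⟨hYint, supermartingale_nat hadp hYint (fun t => ?_)⟩
  set H : Ω → ℝ := fun ω => calG' g (runMax M t ω) with hHdef
  have hHmeas : StronglyMeasurable[ℱ t] H := by
    have : H = fun ω => G2 (runMax M t ω) := by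
      funext ω; simp only [hHdef, hG2def, hmax t ω]
    rw [this]
    exact (hG2anti.measurable.comp (hS_meas t)).stronglyMeasurable
  set D : Ω → ℝ := fun ω => M (t + 1) ω - M t ω with hDdef
  have hDint : Integrable D P := (hsuper.integrable (t + 1)).sub (hsuper.integrable t)
  have hHD : Integrable (H * D) P := by
    have := Integrable.bdd_mul hDint ((hHmeas.mono (ℱ.le t)).aestronglyMeasurable)
      (Filter.Eventually.of_forall (fun ω => by rw [Real.norm_eq_abs, abs_of_nonneg (hG'nn t ω)]; exact hG'bd t ω))
    exact this
  have hZint : Integrable (ayProc g M t + H * D) P := (hYint t).add hHD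
  have step1 : P[ayProc g M (t + 1)|ℱ t] ≤ᵐ[P] P[ayProc g M t + H * D|ℱ t] := by
    refine condExp_mono (hYint (t + 1)) hZint (Filter.Eventually.of_forall (fun ω => ?_))
    exact hkey t ω
  have step2 : P[ayProc g M t + H * D|ℱ t] =ᵐ[P]
      ayProc g M t + H * P[D|ℱ t] := by
    refine (condExp_add (hYint t) hHD (ℱ t)).trans ?_
    refine EventuallyEq.add ?_ ?_
    · exact Filter.Eventually.of_forall (fun ω => by
        rw [condExp_of_stronglyMeasurable (ℱ.le t) (hYmeas t) (hYint t)])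
    · exact condExp_mul_of_stronglyMeasurable_left hHmeas hHD hDint
  have step3 : P[D|ℱ t] ≤ᵐ[P] 0 := by
    have h1 : P[D|ℱ t] =ᵐ[P] P[M (t + 1)|ℱ t] - P[M t|ℱ t] :=
      condExp_sub (hsuper.integrable (t + 1)) (hsuper.integrable t) (ℱ t)
    have h2 : P[M t|ℱ t] = M t :=
      condExp_of_stronglyMeasurable (ℱ.le t) (hsuper.stronglyAdapted t) (hsuper.integrable t)
    have h3 := hsuper.condExp_ae_le (le_refl t)
    have h4 : P[M (t + 1)|ℱ t] ≤ᵐ[P] M t := hsuper.condExp_ae_le (Nat.le_succ t)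
    filter_upwards [h1, h4] with ω hω1 hω4
    rw [hω1, Pi.sub_apply, h2, Pi.zero_apply]
    simpa using hω4
  filter_upwards [step1, step2, step3] with ω h1 h2 h3
  have hHnn : 0 ≤ H ω := hG'nn t ω
  have h3' : (P[D|ℱ t]) ω ≤ 0 := h3
  have h2' : (P[ayProc g M t + H * D|ℱ t]) ω = ayProc g M t ω + H ω * (P[D|ℱ t]) ω := h2
  have h1' : (P[ayProc g M (t + 1)|ℱ t]) ω ≤ (P[ayProc g M t + H * D|ℱ t]) ω := h1
  have := mul_nonpos_of_nonneg_of_nonpos hHnn h3'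
  calc (P[ayProc g M (t + 1)|ℱ t]) ω ≤ (P[ayProc g M t + H * D|ℱ t]) ω := h1'
    _ = ayProc g M t ω + H ω * (P[D|ℱ t]) ω := h2'
    _ ≤ ayProc g M t ω := by linarith
end
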